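/- Generalized adjoint method with parameter-dependent loss: Let S > 0 and f : [0,S] × ℝ^{n_z} × ℝ^{n_θ} → ℝ^{n_z} be continuously differentiable. Fix θ ∈ ℝ^{n_θ}, suppose z : [0,S] × ℝ^{n_θ} → ℝ^{n_z} is continuously differentiable, solves ∂z/∂s(s,θ) = f(s, z(s,θ), θ) with z(0,θ) = z₀ independent of θ, and v(s) = ∂z/∂θ(s,θ) satisfies the variational equation v'(s) = (∂f/∂z) v(s) + (∂f/∂θ), v(0) = 0 (Jacobians of f evaluated at (s, z(s,θ), θ)). Let L : ℝ^{n_z} × ℝ^{n_θ} → ℝ and l : [0,S] × ℝ^{n_z} × ℝ^{n_θ} → ℝ be continuously differentiable and define the loss with explicit parameter dependence ℓ(θ) = L(z(S,θ), θ) + ∫₀ᔆ l(τ, z(τ,θ), θ) dτ. If a : [0,S] → ℝ^{n_z} satisfies a'(s)ᵀ = −a(s)ᵀ (∂f/∂z)(s, z(s,θ), θ) − (∂l/∂z)(s, z(s,θ), θ) with a(S)ᵀ = (∂L/∂z)(z(S,θ), θ), then dℓ/dθ = (∂L/∂θ)(z(S,θ), θ) + ∫₀ᔆ [ a(τ)ᵀ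 (∂f/∂θ)(τ, z(τ,θ), θ) + (∂l/∂θ)(τ, z(τ,θ), θ) ] dτ. -/

import Mathlib

open MeasureTheory Matrix

/-- The continuous linear map `w ↦ M *ᵥ w` given by a Jacobian matrix `M`. -/
noncomputable def mvCLM {m n : ℕ} (M : Matrix (Fin m) (Fin n) ℝ) :
    (Fin n → ℝ) →L[ℝ] (Fin m → ℝ) :=
  LinearMap.toContinuousLinearMap M.mulVecLin

/-- The continuous linear functional `w ↦ g ⬝ᵥ w` given by a gradient (row) vector `g`. -/
noncomputable def dotCLM {n : ℕ} (g : Fin n → ℝ) : (Fin n → ℝ) →L[ℝ] ℝ :=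
  LinearMap.toContinuousLinearMap
    { toFun := fun w => g ⬝ᵥ w
      map_add' := by intro x y; simp [dotProduct_add]
      map_smul' := by intro c x; simp [dotProduct_smul] }

attribute [local instance] Matrix.normedAddCommGroup Matrix.normedSpace


lemma mvCLM_apply {m n : ℕ} (M : Matrix (Fin m) (Fin n) ℝ) (w : Fin n → ℝ) :
    mvCLM M w = M *ᵥ w := rfl

lemma dotCLM_apply {n : ℕ} (g w : Fin n → ℝ) : dotCLM g w = g ⬝ᵥ w := rfl

lemma dotCLM_add {n : ℕ} (g h : Fin n → ℝ) : dotCLM (g + h) = dotCLM g + dotCLM h := by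
  ext w; simp [dotCLM_apply, add_dotProduct]

noncomputable def dotCLM2 {n : ℕ} : (Fin n → ℝ) →L[ℝ] ((Fin n → ℝ) →L[ℝ] ℝ) :=
  LinearMap.toContinuousLinearMap
    { toFun := dotCLM
      map_add' := fun x y => by ext w; simp [dotCLM_apply, add_dotProduct]
      map_smul' := fun c x => by ext w; simp [dotCLM_apply, smul_dotProduct] }

lemma dotCLM2_apply {n : ℕ} (g : Fin n → ℝ) : dotCLM2 g = dotCLM g := rfl

noncomputable def entryCLM {m n : ℕ} (i : Fin m) (j : Fin n) :
    Matrix (Fin m) (Fin n) ℝ →L[ℝ] ℝ :=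
  LinearMap.toContinuousLinearMap
    { toFun := fun M => M i j
      map_add' := fun _ _ => rfl
      map_smul' := fun _ _ => rfl }

lemma entryCLM_apply {m n : ℕ} (i : Fin m) (j : Fin n) (M : Matrix (Fin m) (Fin n) ℝ) :
    entryCLM i j M = M i j := rfl

noncomputable def vecMulCLM2 {m n : ℕ} :
    (Fin m → ℝ) →L[ℝ] (Matrix (Fin m) (Fin n) ℝ →L[ℝ] (Fin n → ℝ)) :=
  LinearMap.toContinuousLinearMap
    { toFun := fun u => LinearMap.toContinuousLinearMap
        { toFun := fun M => u ᵥ* M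
          map_add' := fun A B => by simp [Matrix.vecMul_add]
          map_smul' := fun c A => by
            ext j
            simp [Matrix.vecMul, dotProduct, Finset.mul_sum, mul_left_comm, mul_comm]
        }
      map_add' := fun x y => by ext M j; simp [Matrix.add_vecMul]
      map_smul' := fun c x => by ext M j; simp [Matrix.smul_vecMul]
    }

lemma vecMulCLM2_apply {m n : ℕ} (u : Fin m → ℝ) (M : Matrix (Fin m) (Fin n) ℝ) :
    vecMulCLM2 u M = u ᵥ* M := rfl

lemma chainA {nz nθ : ℕ} {φ : (Fin nz → ℝ) → (Fin nθ → ℝ) → ℝ}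
    (hφ : Differentiable ℝ (fun q : (Fin nz → ℝ) × (Fin nθ → ℝ) => φ q.1 q.2))
    {ψ : (Fin nθ → ℝ) → (Fin nz → ℝ)} {M : Matrix (Fin nz) (Fin nθ) ℝ} {θ : Fin nθ → ℝ}
    (hψ : HasFDerivAt ψ (mvCLM M) θ)
    {g₁ : Fin nz → ℝ} (h₁ : HasFDerivAt (fun w => φ w θ) (dotCLM g₁) (ψ θ))
    {g₂ : Fin nθ → ℝ} (h₂ : HasFDerivAt (fun q => φ (ψ θ) q) (dotCLM g₂) θ) :
    HasFDerivAt (fun q => φ (ψ q) q) (dotCLM (g₁ ᵥ* M + g₂)) θ := by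
  set Φ := fun q : (Fin nz → ℝ) × (Fin nθ → ℝ) => φ q.1 q.2 with hΦ
  set D := fderiv ℝ Φ (ψ θ, θ) with hDdef
  have hD : HasFDerivAt Φ D (ψ θ, θ) := (hφ _).hasFDerivAt
  have hinl : HasFDerivAt (fun w : Fin nz → ℝ => (w, θ))
      (ContinuousLinearMap.inl ℝ (Fin nz → ℝ) (Fin nθ → ℝ)) (ψ θ) :=
    (hasFDerivAt_id _).prodMk (hasFDerivAt_const _ _)
  have hinr : HasFDerivAt (fun q : Fin nθ → ℝ => (ψ θ, q))
      (ContinuousLinearMap.inr ℝ (Fin nz → ℝ) (Fin nθ → ℝ)) θ :=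
    (hasFDerivAt_const _ _).prodMk (hasFDerivAt_id _)
  have c1 : HasFDerivAt (fun w => φ w θ)
      (D.comp (ContinuousLinearMap.inl ℝ (Fin nz → ℝ) (Fin nθ → ℝ))) (ψ θ) :=
    by have := hD.comp (ψ θ) hinl; exact this
  have c2 : HasFDerivAt (fun q => φ (ψ θ) q)
      (D.comp (ContinuousLinearMap.inr ℝ (Fin nz → ℝ) (Fin nθ → ℝ))) θ :=
    by have := hD.comp θ hinr; exact this
  have e1 := c1.unique h₁
  have e2 := c2.unique h₂
  have hpair : HasFDerivAt (fun q : Fin nθ → ℝ => (ψ q, q))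
      ((mvCLM M).prod (ContinuousLinearMap.id ℝ (Fin nθ → ℝ))) θ :=
    hψ.prodMk (hasFDerivAt_id θ)
  have ctot0 := HasFDerivAt.comp (f := fun q : Fin nθ → ℝ => (ψ q, q)) θ hD hpair
  have ctot : HasFDerivAt (fun q => φ (ψ q) q)
      (D.comp ((mvCLM M).prod (ContinuousLinearMap.id ℝ (Fin nθ → ℝ)))) θ := ctot0
  have key : D.comp ((mvCLM M).prod (ContinuousLinearMap.id ℝ (Fin nθ → ℝ)))
      = dotCLM (g₁ ᵥ* M + g₂) := by
    ext w
    have hsplit : ((M *ᵥ w, w) : (Fin nz → ℝ) × (Fin nθ → ℝ))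
        = (M *ᵥ w, 0) + (0, w) := by simp
    have := congrArg (fun (T : (Fin nz → ℝ) →L[ℝ] ℝ) => T (M *ᵥ w)) e1
    have h1' : D (M *ᵥ w, 0) = g₁ ⬝ᵥ (M *ᵥ w) := this
    have h2' : D (0, w) = g₂ ⬝ᵥ w := congrArg (fun (T : (Fin nθ → ℝ) →L[ℝ] ℝ) => T w) e2
    calc D ((mvCLM M).prod (ContinuousLinearMap.id ℝ (Fin nθ → ℝ)) w)
        = D (M *ᵥ w, w) := rfl
      _ = D (M *ᵥ w, 0) + D (0, w) := by rw [hsplit, map_add]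
      _ = g₁ ⬝ᵥ (M *ᵥ w) + g₂ ⬝ᵥ w := by rw [h1', h2']
      _ = (g₁ ᵥ* M + g₂) ⬝ᵥ w := by
          rw [Matrix.dotProduct_mulVec, add_dotProduct]
  rw [key] at ctot
  exact ctot

lemma partial2 {E : Type*} [NormedAddCommGroup E] [NormedSpace ℝ E] {nz nθ : ℕ}
    {h : ℝ × (Fin nz → ℝ) × (Fin nθ → ℝ) → E} (hh : Differentiable ℝ h)
    (s : ℝ) (w₀ : Fin nz → ℝ) (q₀ : Fin nθ → ℝ) :
    HasFDerivAt (fun w => h (s, w, q₀))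
      ((fderiv ℝ h (s, w₀, q₀)).comp
        ((0 : (Fin nz → ℝ) →L[ℝ] ℝ).prod
          ((ContinuousLinearMap.id ℝ (Fin nz → ℝ)).prod 0))) w₀ := by
  have hinner : HasFDerivAt
      (fun w : Fin nz → ℝ => ((s, w, q₀) : ℝ × (Fin nz → ℝ) × (Fin nθ → ℝ)))
      ((0 : (Fin nz → ℝ) →L[ℝ] ℝ).prod
        ((ContinuousLinearMap.id ℝ (Fin nz → ℝ)).prod 0)) w₀ :=
    (hasFDerivAt_const _ _).prodMk ((hasFDerivAt_id _).prodMk (hasFDerivAt_const _ _))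
  exact HasFDerivAt.comp
    (f := fun w : Fin nz → ℝ => ((s, w, q₀) : ℝ × (Fin nz → ℝ) × (Fin nθ → ℝ)))
    w₀ (hh _).hasFDerivAt hinner

lemma partial3 {E : Type*} [NormedAddCommGroup E] [NormedSpace ℝ E] {nz nθ : ℕ}
    {h : ℝ × (Fin nz → ℝ) × (Fin nθ → ℝ) → E} (hh : Differentiable ℝ h)
    (s : ℝ) (w₀ : Fin nz → ℝ) (q₀ : Fin nθ → ℝ) :
    HasFDerivAt (fun q => h (s, w₀, q))
      ((fderiv ℝ h (s, w₀, q₀)).comp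
        ((0 : (Fin nθ → ℝ) →L[ℝ] ℝ).prod
          ((0 : (Fin nθ → ℝ) →L[ℝ] (Fin nz → ℝ)).prod
            (ContinuousLinearMap.id ℝ (Fin nθ → ℝ))))) q₀ := by
  have hinner : HasFDerivAt
      (fun q : Fin nθ → ℝ => ((s, w₀, q) : ℝ × (Fin nz → ℝ) × (Fin nθ → ℝ)))
      ((0 : (Fin nθ → ℝ) →L[ℝ] ℝ).prod
        ((0 : (Fin nθ → ℝ) →L[ℝ] (Fin nz → ℝ)).prod
          (ContinuousLinearMap.id ℝ (Fin nθ → ℝ)))) q₀ :=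
    (hasFDerivAt_const _ _).prodMk ((hasFDerivAt_const _ _).prodMk (hasFDerivAt_id _))
  exact HasFDerivAt.comp
    (f := fun q : Fin nθ → ℝ => ((s, w₀, q) : ℝ × (Fin nz → ℝ) × (Fin nθ → ℝ)))
    q₀ (hh _).hasFDerivAt hinner

lemma contOn_dot {α : Type*} [TopologicalSpace α] {s : Set α} {n : ℕ}
    {p q : α → Fin n → ℝ} (hp : ContinuousOn p s) (hq : ContinuousOn q s) :
    ContinuousOn (fun x => p x ⬝ᵥ q x) s := by
  simp only [dotProduct]
  apply continuousOn_finset_sum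
  intro i _
  exact (((continuous_apply i).comp_continuousOn hp).mul
    ((continuous_apply i).comp_continuousOn hq))

lemma vecMul_apply_single {m n : ℕ} (u : Fin m → ℝ) (M : Matrix (Fin m) (Fin n) ℝ)
    (j : Fin n) : (u ᵥ* M) j = u ⬝ᵥ (M *ᵥ Pi.single j 1) := by
  simp [Matrix.vecMul, Matrix.mulVec_single]; rfl

/-- **Generalized adjoint method with parameter-dependent loss.**
For the Neural ODE `ż(s,θ) = f(s, z(s,θ), θ)`, `z(0,θ) = z₀`, with loss
`ℓ(θ) = L(z(S,θ), θ) + ∫₀ˢ l(τ, z(τ,θ), θ) dτ` depending explicitly on the parameters,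
the gradient is
`dℓ/dθ = (∂L/∂θ)(z(S,θ), θ) + ∫₀ˢ [ a(τ)ᵀ (∂f/∂θ)(τ, z(τ,θ), θ) + (∂l/∂θ)(τ, z(τ,θ), θ) ] dτ`,
where `a` is the adjoint state. -/
theorem generalized_adjoint_parameter_dependent_loss
    {nz nθ : ℕ} {S : ℝ} (hS : 0 < S)
    (f : ℝ → (Fin nz → ℝ) → (Fin nθ → ℝ) → (Fin nz → ℝ))
    (hf : ContDiff ℝ 1 (fun q : ℝ × (Fin nz → ℝ) × (Fin nθ → ℝ) => f q.1 q.2.1 q.2.2))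
    (θ : Fin nθ → ℝ) (z : ℝ → (Fin nθ → ℝ) → (Fin nz → ℝ)) (z₀ : Fin nz → ℝ)
    (hz : ContDiff ℝ 1 (fun q : ℝ × (Fin nθ → ℝ) => z q.1 q.2))
    (hode : ∀ s ∈ Set.Icc (0:ℝ) S, HasDerivAt (fun u => z u θ) (f s (z s θ) θ) s)
    (hinit : ∀ θ' : Fin nθ → ℝ, z 0 θ' = z₀)
    -- Jacobians of `f` along the solution
    (Fz : ℝ → Matrix (Fin nz) (Fin nz) ℝ) (Fθ : ℝ → Matrix (Fin nz) (Fin nθ) ℝ)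
    (hFz : ∀ s ∈ Set.Icc (0:ℝ) S, HasFDerivAt (fun w => f s w θ) (mvCLM (Fz s)) (z s θ))
    (hFθ : ∀ s ∈ Set.Icc (0:ℝ) S, HasFDerivAt (fun q => f s (z s θ) q) (mvCLM (Fθ s)) θ)
    -- `v(s) = ∂z/∂θ(s,θ)` satisfies the variational equation with `v 0 = 0`
    (v : ℝ → Matrix (Fin nz) (Fin nθ) ℝ)
    (hv : ∀ s ∈ Set.Icc (0:ℝ) S, HasFDerivAt (fun q => z s q) (mvCLM (v s)) θ)
    (hvar : ∀ s ∈ Set.Icc (0:ℝ) S, HasDerivAt v (Fz s * v s + Fθ s) s)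
    (hv0 : v 0 = 0)
    -- parameter-dependent loss functions and their partial gradients
    (L : (Fin nz → ℝ) → (Fin nθ → ℝ) → ℝ) (l : ℝ → (Fin nz → ℝ) → (Fin nθ → ℝ) → ℝ)
    (hL : ContDiff ℝ 1 (fun q : (Fin nz → ℝ) × (Fin nθ → ℝ) => L q.1 q.2))
    (hl : ContDiff ℝ 1 (fun q : ℝ × (Fin nz → ℝ) × (Fin nθ → ℝ) => l q.1 q.2.1 q.2.2))
    (Lz : Fin nz → ℝ) (lz : ℝ → (Fin nz → ℝ))
    (hLz : HasFDerivAt (fun w => L w θ) (dotCLM Lz) (z S θ))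
    (hlz : ∀ s ∈ Set.Icc (0:ℝ) S, HasFDerivAt (fun w => l s w θ) (dotCLM (lz s)) (z s θ))
    -- the adjoint state
    (a : ℝ → (Fin nz → ℝ))
    (ha : ∀ s ∈ Set.Icc (0:ℝ) S, HasDerivAt a (-(a s ᵥ* Fz s) - lz s) s)
    (haS : a S = Lz)
    -- partial gradients of `L` and `l` with respect to the parameters
    (Lθgrad : Fin nθ → ℝ) (lθgrad : ℝ → (Fin nθ → ℝ))
    (hLθ : HasFDerivAt (fun q : Fin nθ → ℝ => L (z S θ) q) (dotCLM Lθgrad) θ)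
    (hlθ : ∀ s ∈ Set.Icc (0:ℝ) S,
      HasFDerivAt (fun q : Fin nθ → ℝ => l s (z s θ) q) (dotCLM (lθgrad s)) θ) :
    HasFDerivAt
      (fun θ' : Fin nθ → ℝ => L (z S θ') θ' + ∫ τ in (0:ℝ)..S, l τ (z τ θ') θ')
      (dotCLM (Lθgrad + ∫ τ in (0:ℝ)..S, (a τ ᵥ* Fθ τ + lθgrad τ))) θ := by
  have hS' : S ∈ Set.Icc (0:ℝ) S := ⟨hS.le, le_rfl⟩
  have hIcc : Set.uIcc (0:ℝ) S = Set.Icc 0 S := Set.uIcc_of_le hS.le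
  have hIoc : Set.uIoc (0:ℝ) S = Set.Ioc 0 S := Set.uIoc_of_le hS.le
  -- basic continuity facts
  have hzsc : Continuous (fun s => z s θ) :=
    hz.continuous.comp (continuous_id.prodMk continuous_const)
  have hpoint : Continuous
      (fun s => ((s, z s θ, θ) : ℝ × (Fin nz → ℝ) × (Fin nθ → ℝ))) :=
    continuous_id.prodMk (hzsc.prodMk continuous_const)
  have ha_cont : ContinuousOn a (Set.Icc 0 S) :=
    fun s hs => (ha s hs).continuousAt.continuousWithinAt
  have hv_cont : ContinuousOn v (Set.Icc 0 S) :=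
    fun s hs => (hvar s hs).continuousAt.continuousWithinAt
  -- full Fréchet derivatives of `l` and `f`
  set lfull : ℝ × (Fin nz → ℝ) × (Fin nθ → ℝ) → ℝ :=
    fun p => l p.1 p.2.1 p.2.2 with hlfull
  set ffull : ℝ × (Fin nz → ℝ) × (Fin nθ → ℝ) → (Fin nz → ℝ) :=
    fun p => f p.1 p.2.1 p.2.2 with hffull
  have hl_diff : Differentiable ℝ lfull := hl.differentiable one_ne_zero
  have hf_diff : Differentiable ℝ ffull := hf.differentiable one_ne_zero
  have hDl_cont : Continuous (fderiv ℝ lfull) := hl.continuous_fderiv one_ne_zero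
  have hDf_cont : Continuous (fderiv ℝ ffull) := hf.continuous_fderiv one_ne_zero
  -- representations of the partial gradients on `[0,S]`
  have hlz_rep : ∀ s ∈ Set.Icc (0:ℝ) S, ∀ i,
      lz s i = fderiv ℝ lfull (s, z s θ, θ) (0, Pi.single i 1, 0) := by
    intro s hs i
    have h2 := (hlz s hs).unique (partial2 hl_diff s (z s θ) θ)
    have h3 := congrArg (fun T : (Fin nz → ℝ) →L[ℝ] ℝ => T (Pi.single i 1)) h2
    simpa [dotCLM_apply] using h3
  have hlθ_rep : ∀ s ∈ Set.Icc (0:ℝ) S, ∀ j,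
      lθgrad s j = fderiv ℝ lfull (s, z s θ, θ) (0, 0, Pi.single j 1) := by
    intro s hs j
    have h2 := (hlθ s hs).unique (partial3 hl_diff s (z s θ) θ)
    have h3 := congrArg (fun T : (Fin nθ → ℝ) →L[ℝ] ℝ => T (Pi.single j 1)) h2
    simpa [dotCLM_apply] using h3
  have hFθ_rep : ∀ s ∈ Set.Icc (0:ℝ) S, ∀ w : Fin nθ → ℝ,
      Fθ s *ᵥ w = fderiv ℝ ffull (s, z s θ, θ) (0, 0, w) := by
    intro s hs w
    have h2 := (hFθ s hs).unique (partial3 hf_diff s (z s θ) θ)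
    have h3 := congrArg
      (fun T : (Fin nθ → ℝ) →L[ℝ] (Fin nz → ℝ) => T w) h2
    simpa [mvCLM_apply] using h3
  -- continuity of the gradient data on `[0,S]`
  have hlz_cont : ContinuousOn lz (Set.Icc (0:ℝ) S) := by
    have hcont : Continuous
        (fun s => fun i => fderiv ℝ lfull (s, z s θ, θ) (0, Pi.single i 1, 0)) :=
      continuous_pi fun i => (hDl_cont.comp hpoint).clm_apply continuous_const
    exact hcont.continuousOn.congr fun s hs => funext fun i => hlz_rep s hs i
  have hlθ_cont : ContinuousOn lθgrad (Set.Icc (0:ℝ) S) := by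
    have hcont : Continuous
        (fun s => fun j => fderiv ℝ lfull (s, z s θ, θ) (0, 0, Pi.single j 1)) :=
      continuous_pi fun j => (hDl_cont.comp hpoint).clm_apply continuous_const
    exact hcont.continuousOn.congr fun s hs => funext fun j => hlθ_rep s hs j
  have haFθ_cont : ContinuousOn (fun s => a s ᵥ* Fθ s) (Set.Icc (0:ℝ) S) := by
    have hcont : ContinuousOn
        (fun s => fun j => a s ⬝ᵥ fderiv ℝ ffull (s, z s θ, θ) (0, 0, Pi.single j 1))
        (Set.Icc (0:ℝ) S) :=
      continuousOn_pi.2 fun j => contOn_dot ha_cont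
        (((hDf_cont.comp hpoint).clm_apply continuous_const).continuousOn)
    refine hcont.congr fun s hs => funext fun j => ?_
    rw [vecMul_apply_single, hFθ_rep s hs]
  have hlzv_cont : ContinuousOn (fun s => lz s ᵥ* v s) (Set.Icc (0:ℝ) S) := by
    have hcont : ContinuousOn
        (fun s => fun j => lz s ⬝ᵥ (v s *ᵥ Pi.single j 1)) (Set.Icc (0:ℝ) S) :=
      continuousOn_pi.2 fun j => contOn_dot hlz_cont
        (continuousOn_pi.2 fun i => by
          have : ContinuousOn (fun s => entryCLM i j (v s)) (Set.Icc (0:ℝ) S) :=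
            (entryCLM i j).continuous.comp_continuousOn hv_cont
          simpa [entryCLM_apply, Matrix.mulVec_single] using this)
    refine hcont.congr fun s hs => funext fun j => ?_
    rw [vecMul_apply_single]
  -- the FTC identity for `s ↦ a s ᵥ* v s`
  have hderiv_g : ∀ t ∈ Set.Icc (0:ℝ) S,
      HasDerivAt (fun s => a s ᵥ* v s) (a t ᵥ* Fθ t - lz t ᵥ* v t) t := by
    intro t ht
    letI : NormedAddCommGroup (Matrix (Fin nz) (Fin nθ) ℝ →L[ℝ] Fin nθ → ℝ) :=
      ContinuousLinearMap.toNormedAddCommGroup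
    letI : NormedSpace ℝ (Matrix (Fin nz) (Fin nθ) ℝ →L[ℝ] Fin nθ → ℝ) :=
      ContinuousLinearMap.toNormedSpace
    have hc : HasDerivAt (fun s => vecMulCLM2 (n := nθ) (a s))
        (vecMulCLM2 (-(a t ᵥ* Fz t) - lz t)) t :=
      by have := (vecMulCLM2 (m := nz) (n := nθ)).hasFDerivAt.comp_hasDerivAt t (ha t ht); exact this
    have hcomb := hc.clm_apply (hvar t ht)
    have heq : vecMulCLM2 (-(a t ᵥ* Fz t) - lz t) (v t)
        + vecMulCLM2 (a t) (Fz t * v t + Fθ t)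
        = a t ᵥ* Fθ t - lz t ᵥ* v t := by
      simp only [vecMulCLM2_apply, Matrix.vecMul_add, Matrix.sub_vecMul,
        Matrix.neg_vecMul, ← Matrix.vecMul_vecMul]
      abel
    replace hcomb := hcomb.congr_deriv heq
    exact hcomb
  have hg'_cont : ContinuousOn (fun t => a t ᵥ* Fθ t - lz t ᵥ* v t)
      (Set.Icc (0:ℝ) S) := haFθ_cont.sub hlzv_cont
  have hg'_ii : IntervalIntegrable (fun t => a t ᵥ* Fθ t - lz t ᵥ* v t) volume 0 S :=
    hg'_cont.intervalIntegrable_of_Icc hS.le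
  have hFTC : (∫ t in (0:ℝ)..S, (a t ᵥ* Fθ t - lz t ᵥ* v t)) = Lz ᵥ* v S := by
    have := intervalIntegral.integral_eq_sub_of_hasDerivAt
      (f := fun s => a s ᵥ* v s)
      (fun t ht => hderiv_g t (hIcc ▸ ht)) hg'_ii
    rw [this]
    show a S ᵥ* v S - a 0 ᵥ* v 0 = Lz ᵥ* v S
    rw [haS, hv0, Matrix.vecMul_zero, sub_zero]
  -- integrability of the two integrands
  have hI1 : IntervalIntegrable (fun τ => lz τ ᵥ* v τ + lθgrad τ) volume 0 S :=
    (hlzv_cont.add hlθ_cont).intervalIntegrable_of_Icc hS.le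
  have hI2 : IntervalIntegrable (fun τ => a τ ᵥ* Fθ τ + lθgrad τ) volume 0 S :=
    (haFθ_cont.add hlθ_cont).intervalIntegrable_of_Icc hS.le
  have hkey : (∫ τ in (0:ℝ)..S, (a τ ᵥ* Fθ τ + lθgrad τ))
      = Lz ᵥ* v S + ∫ τ in (0:ℝ)..S, (lz τ ᵥ* v τ + lθgrad τ) := by
    have hsub : (∫ τ in (0:ℝ)..S, (a τ ᵥ* Fθ τ + lθgrad τ))
        - ∫ τ in (0:ℝ)..S, (lz τ ᵥ* v τ + lθgrad τ) = Lz ᵥ* v S := by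
      calc (∫ τ in (0:ℝ)..S, (a τ ᵥ* Fθ τ + lθgrad τ))
            - ∫ τ in (0:ℝ)..S, (lz τ ᵥ* v τ + lθgrad τ)
          = ∫ τ in (0:ℝ)..S,
              ((a τ ᵥ* Fθ τ + lθgrad τ) - (lz τ ᵥ* v τ + lθgrad τ)) :=
            (intervalIntegral.integral_sub hI2 hI1).symm
        _ = ∫ τ in (0:ℝ)..S, (a τ ᵥ* Fθ τ - lz τ ᵥ* v τ) :=
            intervalIntegral.integral_congr (fun τ _ => by abel)
        _ = Lz ᵥ* v S := hFTC
    exact sub_eq_iff_eq_add.mp hsub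
  -- derivative of the terminal-loss term
  have hL_diff : Differentiable ℝ (fun q : (Fin nz → ℝ) × (Fin nθ → ℝ) => L q.1 q.2) :=
    hL.differentiable one_ne_zero
  have h1 : HasFDerivAt (fun θ' : Fin nθ → ℝ => L (z S θ') θ')
      (dotCLM (Lz ᵥ* v S + Lθgrad)) θ :=
    chainA hL_diff (hv S hS') hLz hLθ
  -- derivative of the running-cost term, by differentiation under the integral
  set G : (Fin nθ → ℝ) → ℝ → ℝ := fun x t => l t (z t x) x with hGdef
  set G' : (Fin nθ → ℝ) → ℝ → (Fin nθ → ℝ) →L[ℝ] ℝ :=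
    fun x t => fderiv ℝ (fun q => l t (z t q) q) x with hG'def
  have hGc : ContDiff ℝ 1 (fun p : ℝ × (Fin nθ → ℝ) => l p.1 (z p.1 p.2) p.2) :=
    hl.comp (contDiff_fst.prodMk (hz.prodMk contDiff_snd))
  have hGdiff : Differentiable ℝ (fun p : ℝ × (Fin nθ → ℝ) => l p.1 (z p.1 p.2) p.2) :=
    hGc.differentiable one_ne_zero
  have hslice : ∀ t : ℝ, Differentiable ℝ (fun q : Fin nθ → ℝ => l t (z t q) q) :=
    fun t => hGdiff.comp ((differentiable_const t).prodMk differentiable_id)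
  have hDG_cont : Continuous (fderiv ℝ (fun p : ℝ × (Fin nθ → ℝ) => l p.1 (z p.1 p.2) p.2)) :=
    hGc.continuous_fderiv one_ne_zero
  have hG'_rep : ∀ (x : Fin nθ → ℝ) (t : ℝ), G' x t
      = (fderiv ℝ (fun p : ℝ × (Fin nθ → ℝ) => l p.1 (z p.1 p.2) p.2) (t, x)).comp
          ((0 : (Fin nθ → ℝ) →L[ℝ] ℝ).prod (ContinuousLinearMap.id ℝ (Fin nθ → ℝ))) := by
    intro x t
    have hinner : HasFDerivAt (fun q : Fin nθ → ℝ => ((t, q) : ℝ × (Fin nθ → ℝ)))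
        ((0 : (Fin nθ → ℝ) →L[ℝ] ℝ).prod (ContinuousLinearMap.id ℝ (Fin nθ → ℝ))) x :=
      (hasFDerivAt_const _ _).prodMk (hasFDerivAt_id _)
    have hcomp := HasFDerivAt.comp
      (f := fun q : Fin nθ → ℝ => ((t, q) : ℝ × (Fin nθ → ℝ)))
      x (hGdiff _).hasFDerivAt hinner
    exact hcomp.fderiv
  obtain ⟨C, hC⟩ := (isCompact_Icc.prod (isCompact_closedBall θ 1)).exists_bound_of_continuousOn
    (s := Set.Icc (0:ℝ) S ×ˢ Metric.closedBall θ 1) hDG_cont.continuousOn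
  have hbound : ∀ t ∈ Set.Icc (0:ℝ) S, ∀ x ∈ Metric.ball θ 1, ‖G' x t‖ ≤ C := by
    intro t ht x hx
    have hmem : ((t, x) : ℝ × (Fin nθ → ℝ)) ∈ Set.Icc (0:ℝ) S ×ˢ Metric.closedBall θ 1 :=
      ⟨ht, Metric.ball_subset_closedBall hx⟩
    have hCt := hC _ hmem
    have hC0 : 0 ≤ C := le_trans (norm_nonneg _) hCt
    rw [hG'_rep]
    refine ContinuousLinearMap.opNorm_le_bound _ hC0 fun w => ?_
    have hw : ‖(((0 : (Fin nθ → ℝ) →L[ℝ] ℝ).prod (ContinuousLinearMap.id ℝ (Fin nθ → ℝ))) w)‖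
        = ‖w‖ := by
      simp [Prod.norm_def, ContinuousLinearMap.prod_apply]
    calc ‖((fderiv ℝ (fun p : ℝ × (Fin nθ → ℝ) => l p.1 (z p.1 p.2) p.2) (t, x)).comp
          ((0 : (Fin nθ → ℝ) →L[ℝ] ℝ).prod (ContinuousLinearMap.id ℝ (Fin nθ → ℝ)))) w‖
        ≤ ‖fderiv ℝ (fun p : ℝ × (Fin nθ → ℝ) => l p.1 (z p.1 p.2) p.2) (t, x)‖ * ‖w‖ := by
          rw [ContinuousLinearMap.comp_apply, ← hw]
          exact ContinuousLinearMap.le_opNorm _ _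
      _ ≤ C * ‖w‖ := by gcongr
  have h2' : HasFDerivAt (fun x => ∫ t in (0:ℝ)..S, G x t)
      (∫ t in (0:ℝ)..S, G' θ t) θ := by
    apply hasFDerivAt_integral_of_dominated_of_fderiv_le'' (bound := fun _ => C)
      (s := Metric.ball θ 1) (Metric.ball_mem_nhds θ one_pos)
    · exact Filter.Eventually.of_forall fun x =>
        ((hGc.continuous.comp (continuous_id.prodMk continuous_const)).aestronglyMeasurable)
    · exact (hGc.continuous.comp (continuous_id.prodMk continuous_const)).intervalIntegrable 0 S
    · have hGc' : Continuous (G' θ) := by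
        have : Continuous (fun t =>
            (fderiv ℝ (fun p : ℝ × (Fin nθ → ℝ) => l p.1 (z p.1 p.2) p.2) (t, θ)).comp
              ((0 : (Fin nθ → ℝ) →L[ℝ] ℝ).prod (ContinuousLinearMap.id ℝ (Fin nθ → ℝ)))) :=
          (hDG_cont.comp (continuous_id.prodMk continuous_const)).clm_comp continuous_const
        have heq : G' θ = fun t =>
            (fderiv ℝ (fun p : ℝ × (Fin nθ → ℝ) => l p.1 (z p.1 p.2) p.2) (t, θ)).comp
              ((0 : (Fin nθ → ℝ) →L[ℝ] ℝ).prod (ContinuousLinearMap.id ℝ (Fin nθ → ℝ))) :=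
          funext fun t => hG'_rep θ t
        rw [heq]; exact this
      exact hGc'.aestronglyMeasurable
    · refine ((ae_restrict_mem measurableSet_uIoc).mono ?_)
      intro t ht x hx
      rw [hIoc] at ht
      exact hbound t (Set.Ioc_subset_Icc_self ht) x hx
    · exact intervalIntegrable_const
    · exact Filter.Eventually.of_forall fun t x _ => ((hslice t) x).hasFDerivAt
  have hinteq : (∫ t in (0:ℝ)..S, G' θ t)
      = dotCLM (∫ τ in (0:ℝ)..S, (lz τ ᵥ* v τ + lθgrad τ)) := by
    have hptwise : ∀ t ∈ Set.Icc (0:ℝ) S,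
        G' θ t = dotCLM (lz t ᵥ* v t + lθgrad t) := by
      intro t ht
      have hφdiff : Differentiable ℝ
          (fun q : (Fin nz → ℝ) × (Fin nθ → ℝ) => l t q.1 q.2) :=
        hl_diff.comp ((differentiable_const t).prodMk differentiable_id)
      have := chainA hφdiff (hv t ht) (hlz t ht) (hlθ t ht)
      exact this.fderiv
    calc (∫ t in (0:ℝ)..S, G' θ t)
        = ∫ t in (0:ℝ)..S, dotCLM2 (lz t ᵥ* v t + lθgrad t) := by
          apply intervalIntegral.integral_congr
          intro t ht
          rw [hIcc] at ht
          exact (hptwise t ht).trans (dotCLM2_apply _).symm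
      _ = dotCLM2 (∫ τ in (0:ℝ)..S, (lz τ ᵥ* v τ + lθgrad τ)) :=
          ContinuousLinearMap.intervalIntegral_comp_comm dotCLM2 hI1
      _ = dotCLM (∫ τ in (0:ℝ)..S, (lz τ ᵥ* v τ + lθgrad τ)) := rfl
  have h2 : HasFDerivAt (fun x : Fin nθ → ℝ => ∫ τ in (0:ℝ)..S, l τ (z τ x) x)
      (dotCLM (∫ τ in (0:ℝ)..S, (lz τ ᵥ* v τ + lθgrad τ))) θ := by
    rw [← hinteq]; exact h2'
  have hsum := h1.add h2
  have hfinal : dotCLM (Lz ᵥ* v S + Lθgrad)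
      + dotCLM (∫ τ in (0:ℝ)..S, (lz τ ᵥ* v τ + lθgrad τ))
      = dotCLM (Lθgrad + ∫ τ in (0:ℝ)..S, (a τ ᵥ* Fθ τ + lθgrad τ)) := by
    rw [← dotCLM_add, hkey]
    congr 1
    abel
  rw [hfinal] at hsum
  exact hsum
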